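/- Let D = {x₀ < x₁ < x₂ < ...} be a strictly increasing unbounded sequence of real numbers and let f : D → ℝ be a function with Ω(f) ≠ ∅. Define the lower convex envelope f̆(x) := sup{h(x) : h ∈ Ω(f)} for x ∈ D. Then for every m ∈ D, m belongs to H̃_f if and only if f̆(m) = f(m). -/
import Mathlib


/-- `h` is convex on the set `D ⊆ ℝ`. -/
def IsConvexOnSet (D : Set ℝ) (h : ℝ → ℝ) : Prop :=
  ∀ a ∈ D, ∀ x ∈ D, ∀ b ∈ D, a < x → x < b →
    h x ≤ ((b - x) * h a + (x - a) * h b) / (b - a)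

/-- `Ω(f)`: the convex functions on `D` lying below `f` on `D`. -/
def Omega (D : Set ℝ) (f : ℝ → ℝ) : Set (ℝ → ℝ) :=
  {h | IsConvexOnSet D h ∧ ∀ x ∈ D, h x ≤ f x}

/-- The lower convex envelope `f̆(x) = sup {h(x) | h ∈ Ω(f)}`. -/
noncomputable def envelope (D : Set ℝ) (f : ℝ → ℝ) (x : ℝ) : ℝ :=
  sSup ((fun h : ℝ → ℝ => h x) '' Omega D f)

/-- `H̃_f`: points of `D` at which `f(x) − a·x` attains its minimum on `D` for some `a`. -/
def Htilde (D : Set ℝ) (f : ℝ → ℝ) : Set ℝ :=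
  {m | m ∈ D ∧ ∃ a : ℝ, ∀ x ∈ D, f m - a * m ≤ f x - a * x}

/-- For `D` a strictly increasing unbounded sequence of reals and `f` with `Ω(f) ≠ ∅`,
a point `m ∈ D` lies in `H̃_f` iff the lower convex envelope touches `f` at `m`. -/
theorem mem_Htilde_iff_envelope_eq (x : ℕ → ℝ) (hx : StrictMono x)
    (hunb : Filter.Tendsto x Filter.atTop Filter.atTop)
    (D : Set ℝ) (hD : D = Set.range x) (f : ℝ → ℝ)
    (hΩ : (Omega D f).Nonempty) :
    ∀ m ∈ D, (m ∈ Htilde D f ↔ envelope D f m = f m) := by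
  intro m hm
  set g := envelope D f with hg
  have hBdd : ∀ p ∈ D, BddAbove ((fun h : ℝ → ℝ => h p) '' Omega D f) := by
    intro p hp
    refine ⟨f p, ?_⟩
    rintro _ ⟨h, hh, rfl⟩
    exact hh.2 p hp
  have hne : ∀ p : ℝ, ((fun h : ℝ → ℝ => h p) '' Omega D f).Nonempty :=
    fun p => hΩ.image _
  have h_env_le : ∀ p ∈ D, g p ≤ f p := by
    intro p hp
    apply csSup_le (hne p)
    rintro _ ⟨h, hh, rfl⟩
    exact hh.2 p hp
  have h_le_env : ∀ h ∈ Omega D f, ∀ p ∈ D, h p ≤ g p := by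
    intro h hh p hp
    exact le_csSup (hBdd p hp) ⟨h, hh, rfl⟩
  have h_env_conv : IsConvexOnSet D g := by
    intro a ha p hp b hb hap hpb
    apply csSup_le (hne p)
    rintro _ ⟨h, hh, rfl⟩
    have h1 := hh.1 a ha p hp b hb hap hpb
    have hga := h_le_env h hh a ha
    have hgb := h_le_env h hh b hb
    have hba : (0:ℝ) < b - a := by linarith
    calc (fun h : ℝ → ℝ => h p) h ≤ ((b - p) * h a + (p - a) * h b) / (b - a) := h1
      _ ≤ ((b - p) * g a + (p - a) * g b) / (b - a) := by
          gcongr ?_ / (b - a)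
          nlinarith
  constructor
  · rintro ⟨-, s, hs⟩
    have hle : g m ≤ f m := h_env_le m hm
    have hge : f m ≤ g m := by
      have hmem : (fun y : ℝ => s * y + (f m - s * m)) ∈ Omega D f := by
        constructor
        · intro a ha p hp b hb hap hpb
          have hba : b - a ≠ 0 := by intro h; nlinarith
          apply le_of_eq
          field_simp
          ring
        · intro y hy
          have := hs y hy
          show s * y + (f m - s * m) ≤ f y
          linarith
      have := h_le_env _ hmem m hm
      simpa using this
    linarith
  · intro henv
    rw [hD] at hm
    obtain ⟨k, rfl⟩ := hm
    have hmD : x k ∈ D := by rw [hD]; exact ⟨k, rfl⟩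
    -- It suffices to find a supporting slope for g at x k
    suffices hsuff : ∃ s : ℝ, ∀ y ∈ D, g (x k) + s * (y - x k) ≤ g y by
      obtain ⟨s, hsupp⟩ := hsuff
      refine ⟨hmD, s, ?_⟩
      intro y hy
      have h1 := hsupp y hy
      have h2 := h_env_le y hy
      have h3 : g (x k) = f (x k) := henv
      linarith
    rcases Nat.eq_zero_or_pos k with hk | hk
    · subst hk
      -- leftmost point: use the slope to the right neighbor x 1
      have hq : x 0 < x 1 := hx (by norm_num)
      have hqD : x 1 ∈ D := by rw [hD]; exact ⟨1, rfl⟩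
      refine ⟨(g (x 1) - g (x 0)) / (x 1 - x 0), ?_⟩
      intro y hy
      have hqm : (0:ℝ) < x 1 - x 0 := by linarith
      have h2 : (g (x 1) - g (x 0)) / (x 1 - x 0) * (x 1 - x 0) = g (x 1) - g (x 0) := by
        field_simp
      obtain ⟨j, rfl⟩ : ∃ j, x j = y := by rw [hD] at hy; exact hy
      rcases lt_trichotomy j 1 with hj | hj | hj
      · interval_cases j
        simp
      · subst hj
        nlinarith
      · have hy1 : x 1 < x j := hx hj
        have conv := h_env_conv (x 0) hmD (x 1) hqD (x j) (by rw [hD]; exact ⟨j, rfl⟩) hq hy1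
        rw [le_div_iff₀ (by linarith)] at conv
        have key : (g (x 1) - g (x 0)) * (x j - x 0) ≤ (g (x j) - g (x 0)) * (x 1 - x 0) := by
          nlinarith
        nlinarith
    · -- interior-type point: use slope from the left neighbor x (k-1)
      obtain ⟨k', rfl⟩ : ∃ k', k = k' + 1 := ⟨k - 1, (Nat.succ_pred_eq_of_pos hk).symm⟩
      set m := x (k' + 1) with hmdef
      set p := x k' with hpdef
      have hpm : p < m := hx (Nat.lt_succ_self k')
      have hpD : p ∈ D := by rw [hD]; exact ⟨k', rfl⟩
      refine ⟨(g m - g p) / (m - p), ?_⟩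
      intro y hy
      have hmp : (0:ℝ) < m - p := by linarith
      have h2 : (g m - g p) / (m - p) * (m - p) = g m - g p := by field_simp
      obtain ⟨j, rfl⟩ : ∃ j, x j = y := by rw [hD] at hy; exact hy
      rcases lt_trichotomy (x j) m with hjm | hjm | hjm
      · -- x j < m, hence j ≤ k', hence x j ≤ p
        have hjk : j < k' + 1 := by
          by_contra hcon
          push_neg at hcon
          exact absurd (hx.monotone hcon) (not_le.mpr hjm)
        have hjp : x j ≤ p := hx.monotone (Nat.lt_succ_iff.mp hjk)
        rcases eq_or_lt_of_le hjp with hjp' | hjp'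
        · rw [hjp']
          nlinarith
        · have conv := h_env_conv (x j) hy p hpD m hmD hjp' hpm
          rw [le_div_iff₀ (by linarith)] at conv
          nlinarith
      · rw [hjm]
        nlinarith
      · have conv := h_env_conv p hpD m hmD (x j) hy hpm hjm
        rw [le_div_iff₀ (by linarith)] at conv
        nlinarith
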